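/- arXiv:2309.04929 — 2 statements merged into one kernel-verified Lean document; each statement's English description precedes it below -/
import Mathlib

section
/- The unique stationary point of U_s(p) = Σ_{n=1}^N (p - C)(α_n/p - D_n/γ) on (0, ∞) is p* = sqrt( C·γ·(Σ_{n=1}^N α_n) / (Σ_{n=1}^N D_n) ), and U_s attains its maximum over (0, ∞) at p*. -/
theorem stmt_7 (N : ℕ) (hN : 1 ≤ N) (α D : Fin N → ℝ) (γ C : ℝ)
    (hα : ∀ n, 0 < α n) (hD : ∀ n, 0 < D n) (hγ : 0 < γ) (hC : 0 < C) :
    deriv (fun p => ∑ n, (p - C) * (α n / p - D n / γ))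
        (Real.sqrt (C * γ * (∑ n, α n) / (∑ n, D n))) = 0 ∧
    (∀ p : ℝ, 0 < p →
      deriv (fun p => ∑ n, (p - C) * (α n / p - D n / γ)) p = 0 →
      p = Real.sqrt (C * γ * (∑ n, α n) / (∑ n, D n))) ∧
    (∀ p : ℝ, 0 < p →
      (∑ n, (p - C) * (α n / p - D n / γ))
        ≤ ∑ n, (Real.sqrt (C * γ * (∑ n, α n) / (∑ n, D n)) - C)
            * (α n / Real.sqrt (C * γ * (∑ n, α n) / (∑ n, D n)) - D n / γ)) := by
  haveI : Nonempty (Fin N) := ⟨⟨0, hN⟩⟩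
  set A : ℝ := ∑ n, α n with hA'
  set B : ℝ := ∑ n, D n with hB'
  have hA : 0 < A := Finset.sum_pos (fun n _ => hα n) Finset.univ_nonempty
  have hB : 0 < B := Finset.sum_pos (fun n _ => hD n) Finset.univ_nonempty
  have hfun : (fun p : ℝ => ∑ n, (p - C) * (α n / p - D n / γ))
      = fun p : ℝ => (p - C) * (A / p - B / γ) := by
    funext p
    rw [← Finset.mul_sum, Finset.sum_sub_distrib, ← Finset.sum_div, ← Finset.sum_div]
  have hderiv : ∀ p : ℝ, p ≠ 0 →
      deriv (fun p : ℝ => ∑ n, (p - C) * (α n / p - D n / γ)) p = C * A / p ^ 2 - B / γ := by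
    intro p hp
    rw [hfun]
    have h1 : HasDerivAt (fun p : ℝ => p - C) 1 p := (hasDerivAt_id p).sub_const C
    have h2 : HasDerivAt (fun p : ℝ => A / p - B / γ) (A * (-(p ^ 2)⁻¹)) p := by
      simpa [div_eq_mul_inv] using ((hasDerivAt_inv hp).const_mul A).sub_const (B / γ)
    have h3 : HasDerivAt (fun p : ℝ => (p - C) * (A / p - B / γ)) _ p := h1.mul h2
    rw [h3.deriv]
    field_simp
    ring
  set q : ℝ := Real.sqrt (C * γ * A / B) with hq'
  have hq : 0 < q := Real.sqrt_pos.mpr (by positivity)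
  have hq2 : q ^ 2 = C * γ * A / B := Real.sq_sqrt (by positivity)
  have hzero : deriv (fun p : ℝ => ∑ n, (p - C) * (α n / p - D n / γ)) q = 0 := by
    rw [hderiv q hq.ne', hq2]
    field_simp
    ring
  refine ⟨hzero, ?_, ?_⟩
  · intro p hp hd
    rw [hderiv p hp.ne'] at hd
    have hp2 : p ^ 2 = C * γ * A / B := by
      have h := sub_eq_zero.mp hd
      field_simp at h
      field_simp
      linarith
    calc p = Real.sqrt (p ^ 2) := (Real.sqrt_sq hp.le).symm
    _ = q := by rw [hp2]
  · intro p hp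
    rw [show (∑ n, (p - C) * (α n / p - D n / γ)) = (p - C) * (A / p - B / γ) from
      congrFun hfun p,
      show (∑ n, (q - C) * (α n / q - D n / γ)) = (q - C) * (A / q - B / γ) from
      congrFun hfun q]
    have hq2' : q ^ 2 * B = C * γ * A := by
      rw [hq2]; field_simp
    rw [div_sub_div _ _ hp.ne' hγ.ne', div_sub_div _ _ hq.ne' hγ.ne',
      ← mul_div_assoc, ← mul_div_assoc, div_le_div_iff₀ (by positivity) (by positivity)]
    have hident : (q - C) * (A * γ - q * B) * (p * γ) - (p - C) * (A * γ - p * B) * (q * γ)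
        = γ * B * q * (p - q) ^ 2 := by linear_combination γ * (p - q) * hq2'
    nlinarith [mul_nonneg (mul_nonneg (mul_nonneg hγ.le hB.le) hq.le) (sq_nonneg (p - q)), hident]
end

section
/- The pair (b*, p*) with p* = sqrt(Cγ·Σα_n/ΣD_n) and b_n* = α_n/p* − D_n/γ constitutes a Stackelberg equilibrium: for every n and every b > 0, U_n(b_n*, p*) ≥ U_n(b, p*), and U_s(p*) ≥ U_s(p) for all p > 0 where U_s(p) = Σ_n (p − C)·b_n*(p); assume γ α_n > p* D_n for all n so each b_n* > 0. -/
theorem stmt_13 (N : ℕ) (hN : 1 ≤ N) (α D : Fin N → ℝ) (γ C : ℝ)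
    (hα : ∀ n, 0 < α n) (hD : ∀ n, 0 < D n) (hγ : 0 < γ) (hC : 0 < C)
    (hint : ∀ n, Real.sqrt (C * γ * (∑ m, α m) / (∑ m, D m)) * D n < γ * α n) :
    (∀ n, ∀ b : ℝ, 0 < b →
      α n * Real.log (1 + γ * b / D n)
          - Real.sqrt (C * γ * (∑ m, α m) / (∑ m, D m)) * b
        ≤ α n * Real.log (1 + γ * (α n / Real.sqrt (C * γ * (∑ m, α m) / (∑ m, D m)) - D n / γ) / D n)
          - Real.sqrt (C * γ * (∑ m, α m) / (∑ m, D m))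
            * (α n / Real.sqrt (C * γ * (∑ m, α m) / (∑ m, D m)) - D n / γ)) ∧
    (∀ p : ℝ, 0 < p →
      (∑ n, (p - C) * (α n / p - D n / γ))
        ≤ ∑ n, (Real.sqrt (C * γ * (∑ m, α m) / (∑ m, D m)) - C)
            * (α n / Real.sqrt (C * γ * (∑ m, α m) / (∑ m, D m)) - D n / γ)) := by
  have hne : Nonempty (Fin N) := ⟨⟨0, hN⟩⟩
  set A : ℝ := ∑ m, α m with hAdef
  set B : ℝ := ∑ m, D m with hBdef
  have hA : 0 < A := Finset.sum_pos (fun n _ => hα n) Finset.univ_nonempty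
  have hB : 0 < B := Finset.sum_pos (fun n _ => hD n) Finset.univ_nonempty
  set q : ℝ := Real.sqrt (C * γ * A / B) with hq
  have hq0 : 0 < q := Real.sqrt_pos.mpr (by positivity)
  have hqsq : q ^ 2 = C * γ * A / B := Real.sq_sqrt (by positivity)
  constructor
  · intro n b hb
    have hd := hD n
    have ha := hα n
    have hbst : 0 < α n / q - D n / γ := by
      have := hint n
      rw [div_sub_div _ _ (ne_of_gt hq0) (ne_of_gt hγ)]
      apply div_pos (by nlinarith) (by positivity)
    set bs : ℝ := α n / q - D n / γ with hbs
    have h1 : (0:ℝ) < 1 + γ * b / D n := by positivity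
    have h2 : (0:ℝ) < 1 + γ * bs / D n := by positivity
    have hx : (0:ℝ) < (1 + γ * b / D n) / (1 + γ * bs / D n) := by positivity
    have hlog := Real.log_le_sub_one_of_pos hx
    rw [Real.log_div (ne_of_gt h1) (ne_of_gt h2)] at hlog
    have hxval : (1 + γ * b / D n) / (1 + γ * bs / D n) - 1 = q * (b - bs) / α n := by
      have h2' : 1 + γ * bs / D n = γ * α n / (q * D n) := by
        rw [hbs]; field_simp; ring
      rw [h2', hbs]; field_simp; ring
    rw [hxval] at hlog
    have h4 := mul_le_mul_of_nonneg_left hlog (le_of_lt ha)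
    have h3 : α n * (q * (b - bs) / α n) = q * (b - bs) := by field_simp
    rw [h3, mul_sub] at h4
    linarith
  · intro p hp
    have hsum : ∀ r : ℝ, (∑ n, (r - C) * (α n / r - D n / γ)) = (r - C) * (A / r - B / γ) := by
      intro r
      rw [hAdef, hBdef, Finset.sum_div, Finset.sum_div, ← Finset.sum_sub_distrib,
        Finset.mul_sum]
    rw [hsum p, hsum q]
    have key : C * γ * A = q ^ 2 * B := by
      rw [hqsq]; field_simp
    have h : (q - C) * (A / q - B / γ) - (p - C) * (A / p - B / γ)
        = B * (p - q) ^ 2 / (p * γ) := by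
      have hp' : p ≠ 0 := hp.ne'
      have hq' : q ≠ 0 := hq0.ne'
      have hγ' : γ ≠ 0 := hγ.ne'
      field_simp
      ring_nf
      linear_combination (q - p) * key
    nlinarith [h, sq_nonneg (p - q), div_nonneg (mul_nonneg hB.le (sq_nonneg (p - q))) (mul_pos hp hγ).le]
end
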